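/- Let a > 0, let f : ℂ → ℂ be complex-differentiable on the open ball B(0,a), and assume that z ↦ ‖f(z)‖² is integrable on B(0,a). Then for every z with ‖z‖ < a, one has ‖f(z)‖ ≤ (√π · (a − ‖z‖))⁻¹ · ‖f‖_{L²(B_a)}. -/

import Mathlib

open Complex Metric MeasureTheory

section AuxLemmas

open Real Set

lemma circle_submean (f : ℂ → ℂ) {z : ℂ} {r : ℝ} (hr : 0 < r)
    (hc : ContinuousOn f (closedBall z r))
    (hd : ∀ w ∈ ball z r, DifferentiableAt ℂ f w) :
    2 * π * ‖f z‖ ^ 2 ≤ ∫ θ in (-π)..π, ‖f (circleMap z r θ)‖ ^ 2 := by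
  set F : ℂ → ℂ := fun w => (f w) ^ 2 with hF
  have hcF : ContinuousOn F (closedBall z r) := hc.pow 2
  have hdF : ∀ w ∈ ball z r \ (∅ : Set ℂ), DifferentiableAt ℂ F w := fun w hw =>
    ((hd w hw.1).pow 2)
  have key := Complex.circleIntegral_sub_center_inv_smul_of_differentiable_on_off_countable
    hr Set.countable_empty hcF hdF
  -- rewrite the circle integral as an interval integral
  have hcirc : (∮ w in C(z, r), (w - z)⁻¹ • F w)
      = ∫ θ in (0)..(2*π), Complex.I * F (circleMap z r θ) := by
    rw [circleIntegral]
    refine intervalIntegral.integral_congr fun θ _ => ?_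
    have hne : circleMap 0 r θ ≠ 0 := circleMap_ne_center hr.ne'
    simp only [deriv_circleMap, circleMap_sub_center, smul_eq_mul]
    field_simp
  rw [hcirc, intervalIntegral.integral_const_mul] at key
  have hI : (∫ θ in (0)..(2*π), F (circleMap z r θ)) = (2 * π) • F z := by
    have h2 : (2 * ↑π * Complex.I : ℂ) • F z = Complex.I * ((2*π : ℝ) • F z) := by
      simp [smul_eq_mul]; ring
    rw [h2] at key
    exact mul_left_cancel₀ Complex.I_ne_zero key
  have hnorm : 2 * π * ‖f z‖ ^ 2 = ‖(2 * π) • F z‖ := by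
    simp [norm_smul, hF, abs_of_pos Real.two_pi_pos, norm_pow, mul_assoc,
      abs_of_pos Real.pi_pos]
  rw [hnorm, ← hI]
  have hcont : ContinuousOn (fun θ : ℝ => F (circleMap z r θ)) (Set.uIcc (0:ℝ) (2*π)) :=
    hcF.comp (continuous_circleMap z r).continuousOn
      (fun θ _ => circleMap_mem_closedBall z hr.le θ)
  calc ‖∫ θ in (0)..(2*π), F (circleMap z r θ)‖
      ≤ ∫ θ in (0)..(2*π), ‖F (circleMap z r θ)‖ :=
        intervalIntegral.norm_integral_le_integral_norm Real.two_pi_pos.le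
    _ = ∫ θ in (0)..(2*π), ‖f (circleMap z r θ)‖ ^ 2 := by
        simp [hF, norm_pow]
    _ = ∫ θ in (-π)..π, ‖f (circleMap z r θ)‖ ^ 2 := by
        have hp : Function.Periodic (fun θ : ℝ => ‖f (circleMap z r θ)‖ ^ 2) (2*π) :=
          fun θ => by simp [(periodic_circleMap z r) θ]
        have := hp.intervalIntegral_add_eq 0 (-π)
        rw [show -π + 2*π = π by ring] at this
        simpa using this


lemma disk_submean (f : ℂ → ℂ) {z : ℂ} {r₀ : ℝ} (h0 : 0 < r₀)
    (hdf : DifferentiableOn ℂ f (ball z r₀))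
    (hint : IntegrableOn (fun w => ‖f w‖ ^ 2) (ball z r₀)) :
    π * r₀ ^ 2 * ‖f z‖ ^ 2 ≤ ∫ w in ball z r₀, ‖f w‖ ^ 2 := by
  set h : ℂ → ℝ := fun w => ‖f w‖ ^ 2 with hh
  set G : ℂ → ℝ := fun u => (ball z r₀).indicator h (z + u) with hGdef
  -- G is integrable and has the same integral
  have hGind : Integrable ((ball z r₀).indicator h) :=
    (integrable_indicator_iff measurableSet_ball).2 hint
  have hG : Integrable G := by
    have := (measurePreserving_add_left (volume : Measure ℂ) z).integrable_comp_emb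
      (MeasurableEquiv.addLeft z).measurableEmbedding (g := (ball z r₀).indicator h)
    exact this.2 hGind
  have hGint : ∫ u, G u = ∫ w in ball z r₀, h w := by
    rw [hGdef]
    simp only
    rw [integral_add_left_eq_self ((ball z r₀).indicator h) z,
      integral_indicator measurableSet_ball]
  -- move to ℝ × ℝ
  set g : ℝ × ℝ → ℝ := fun v => G (Complex.measurableEquivRealProd.symm v) with hgdef
  have hg : Integrable g :=
    ((Complex.volume_preserving_equiv_real_prod.symm Complex.measurableEquivRealProd).integrable_comp_emb
      Complex.measurableEquivRealProd.symm.measurableEmbedding).2 hG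
  have hgint : ∫ v, g v = ∫ u, G u :=
    (Complex.volume_preserving_equiv_real_prod.symm Complex.measurableEquivRealProd).integral_comp
      Complex.measurableEquivRealProd.symm.measurableEmbedding G
  -- polar coordinates
  have hpolar : (∫ p in polarCoord.target, p.1 • g (polarCoord.symm p)) = ∫ v, g v :=
    integral_comp_polarCoord_symm g
  -- the rectangle
  set S : Set (ℝ × ℝ) := Ioo (0:ℝ) r₀ ×ˢ Ioo (-π) π with hSdef
  set F : ℝ × ℝ → ℝ := fun p => p.1 • g (polarCoord.symm p) with hFdef
  have hSmeas : MeasurableSet S := measurableSet_Ioo.prod measurableSet_Ioo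
  have hSsub : S ⊆ polarCoord.target := by
    rintro ⟨r, θ⟩ ⟨hr, hθ⟩
    exact ⟨hr.1, hθ⟩
  -- symm identities
  have hsymm_eq : ∀ p : ℝ × ℝ, Complex.measurableEquivRealProd.symm (polarCoord.symm p)
      = Complex.polarCoord.symm p := by
    intro p
    have h1 : polarCoord.symm p = (p.1 * Real.cos p.2, p.1 * Real.sin p.2) := rfl
    rw [h1, Complex.measurableEquivRealProd_symm_apply, Complex.polarCoord_symm_apply]
    simp [Complex.ext_iff, Complex.cos_ofReal_re, Complex.sin_ofReal_re]
  have habs : ∀ p : ℝ × ℝ, ‖Complex.measurableEquivRealProd.symm (polarCoord.symm p)‖ = |p.1| := by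
    intro p
    rw [hsymm_eq p]
    exact Complex.norm_polarCoord_symm p
  have hGzero : ∀ u : ℂ, r₀ ≤ ‖u‖ → G u = 0 := by
    intro u hu
    apply indicator_of_notMem
    rw [mem_ball, dist_eq_norm]
    simp only [add_sub_cancel_left, not_lt]
    exact hu
  have hFzero : ∀ p ∈ polarCoord.target \ S, F p = 0 := by
    rintro ⟨r, θ⟩ ⟨⟨hr, hθ⟩, hpS⟩
    have hrr : r₀ ≤ r := by
      by_contra hcon
      exact hpS ⟨⟨hr, lt_of_not_ge hcon⟩, hθ⟩
    have hg0 : g (polarCoord.symm (r, θ)) = 0 := by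
      apply hGzero
      rw [habs (r, θ), abs_of_pos (show (0:ℝ) < r from hr)]
      exact hrr
    show (r, θ).1 • g (polarCoord.symm (r, θ)) = 0
    rw [hg0, smul_zero]
  -- integrability of F on S via change of variables
  have hinj : Set.InjOn polarCoord.symm S := by
    have := polarCoord.symm.injOn
    rw [OpenPartialHomeomorph.symm_source] at this
    exact this.mono hSsub
  have hFS : IntegrableOn F S := by
    have himg : IntegrableOn g (polarCoord.symm '' S) := hg.integrableOn
    have := (integrableOn_image_iff_integrableOn_abs_det_fderiv_smul volume hSmeas
      (fun p _ => (hasFDerivAt_polarCoord_symm p).hasFDerivWithinAt) hinj g).1 himg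
    refine this.congr_fun (fun p hp => ?_) hSmeas
    have hdet : (LinearMap.toContinuousLinearMap (Matrix.toLin (Module.Basis.finTwoProd ℝ)
        (Module.Basis.finTwoProd ℝ)
        !![Real.cos p.2, -p.1 * Real.sin p.2; Real.sin p.2, p.1 * Real.cos p.2])).det = p.1 := by
      conv_rhs => rw [← one_mul p.1, ← Real.cos_sq_add_sin_sq p.2]
      simp only [neg_mul, LinearMap.det_toContinuousLinearMap, LinearMap.det_toLin,
        Matrix.det_fin_two_of, sub_neg_eq_add]
      ring
    show |(fderivPolarCoordSymm p).det| • g (polarCoord.symm p) = F p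
    unfold fderivPolarCoordSymm
    rw [hdet, abs_of_pos hp.1.1]
  -- integral over target equals integral over S
  have htarget_eq : (∫ p in polarCoord.target, F p) = ∫ p in S, F p := by
    have hdiff : IntegrableOn F (polarCoord.target \ S) := by
      refine (integrableOn_congr_fun hFzero
        (polarCoord.open_target.measurableSet.diff hSmeas)).2 ?_
      exact integrableOn_zero
    have hsplit : polarCoord.target = S ∪ (polarCoord.target \ S) :=
      (Set.union_diff_cancel hSsub).symm
    rw [hsplit, setIntegral_union disjoint_sdiff_right
      (polarCoord.open_target.measurableSet.diff hSmeas) hFS hdiff]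
    have : ∫ p in polarCoord.target \ S, F p = 0 := by
      rw [setIntegral_congr_fun (polarCoord.open_target.measurableSet.diff hSmeas) hFzero]
      simp
    rw [this, add_zero]
  -- Fubini on S
  have hFS' : IntegrableOn F (Ioo (0:ℝ) r₀ ×ˢ Ioo (-π) π) (volume.prod volume) := by
    rwa [← Measure.volume_eq_prod]
  have hFub : (∫ p in S, F p) = ∫ r in Ioo (0:ℝ) r₀, ∫ θ in Ioo (-π) π, F (r, θ) := by
    rw [hSdef]
    rw [Measure.volume_eq_prod]
    exact setIntegral_prod F hFS'
  -- inner bound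
  have hinner : ∀ r ∈ Ioo (0:ℝ) r₀,
      2 * π * ‖f z‖ ^ 2 * r ≤ ∫ θ in Ioo (-π) π, F (r, θ) := by
    intro r hr
    have hcirc : ∀ θ : ℝ, z + Complex.polarCoord.symm (r, θ) = circleMap z r θ := by
      intro θ
      rw [Complex.polarCoord_symm_apply, circleMap, Complex.exp_mul_I]
      push_cast
      ring
    have hFval : ∀ θ ∈ Ioo (-π) π, F (r, θ) = r * ‖f (circleMap z r θ)‖ ^ 2 := by
      intro θ _
      have hmem : z + Complex.polarCoord.symm (r, θ) ∈ ball z r₀ := by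
        rw [mem_ball, dist_eq_norm, add_sub_cancel_left,
          Complex.norm_polarCoord_symm, abs_of_pos hr.1]
        exact hr.2
      have : g (polarCoord.symm (r, θ)) = ‖f (circleMap z r θ)‖ ^ 2 := by
        rw [hgdef]
        simp only
        rw [hsymm_eq (r, θ), hGdef]
        simp only
        rw [indicator_of_mem hmem, hcirc θ]
      show (r, θ).1 • g (polarCoord.symm (r, θ)) = _
      rw [this, smul_eq_mul]
    calc 2 * π * ‖f z‖ ^ 2 * r
        ≤ (∫ θ in (-π)..π, ‖f (circleMap z r θ)‖ ^ 2) * r := by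
          apply mul_le_mul_of_nonneg_right _ hr.1.le
          apply circle_submean f hr.1
          · exact hdf.continuousOn.mono (fun w hw => by
              rw [mem_ball]
              calc dist w z ≤ r := mem_closedBall.1 hw
                _ < r₀ := hr.2)
          · intro w hw
            have hw' : w ∈ ball z r₀ := ball_subset_ball hr.2.le hw
            exact (hdf w hw').differentiableAt (isOpen_ball.mem_nhds hw')
      _ = ∫ θ in Ioo (-π) π, F (r, θ) := by
          rw [setIntegral_congr_fun measurableSet_Ioo hFval, integral_const_mul,
            intervalIntegral.integral_of_le (by linarith [Real.pi_pos] : -π ≤ π),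
            integral_Ioc_eq_integral_Ioo, mul_comm]
  -- outer bound
  have houter : Integrable (fun r => ∫ θ in Ioo (-π) π, F (r, θ))
      (volume.restrict (Ioo (0:ℝ) r₀)) := by
    have : Integrable F ((volume.restrict (Ioo (0:ℝ) r₀)).prod
        (volume.restrict (Ioo (-π) π))) := by
      rw [Measure.prod_restrict]
      exact hFS'
    exact this.integral_prod_left
  have hsmall : IntegrableOn (fun r : ℝ => 2 * π * ‖f z‖ ^ 2 * r) (Ioo (0:ℝ) r₀) := by
    have hc : Continuous (fun r : ℝ => 2 * π * ‖f z‖ ^ 2 * r) := continuous_const.mul continuous_id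
    exact ((hc.intervalIntegrable (μ := volume) (0:ℝ) r₀).1).mono_set Ioo_subset_Ioc_self
  have hmono : (∫ r in Ioo (0:ℝ) r₀, 2 * π * ‖f z‖ ^ 2 * r)
      ≤ ∫ r in Ioo (0:ℝ) r₀, ∫ θ in Ioo (-π) π, F (r, θ) :=
    setIntegral_mono_on hsmall houter measurableSet_Ioo hinner
  have hcomp : (∫ r in Ioo (0:ℝ) r₀, 2 * π * ‖f z‖ ^ 2 * r) = π * r₀ ^ 2 * ‖f z‖ ^ 2 := by
    rw [integral_const_mul, ← integral_Ioc_eq_integral_Ioo,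
      ← intervalIntegral.integral_of_le h0.le]
    rw [integral_id]
    ring
  calc π * r₀ ^ 2 * ‖f z‖ ^ 2 = ∫ r in Ioo (0:ℝ) r₀, 2 * π * ‖f z‖ ^ 2 * r := hcomp.symm
    _ ≤ ∫ r in Ioo (0:ℝ) r₀, ∫ θ in Ioo (-π) π, F (r, θ) := hmono
    _ = ∫ p in S, F p := hFub.symm
    _ = ∫ p in polarCoord.target, F p := htarget_eq.symm
    _ = ∫ v, g v := hpolar
    _ = ∫ u, G u := hgint
    _ = ∫ w in ball z r₀, h w := hGint



end AuxLemmas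

/-- Interior pointwise bound: for `f` holomorphic on `ball 0 a` with `‖f‖²` integrable,
`‖f(z)‖ ≤ (√π (a - ‖z‖))⁻¹ ‖f‖_{L²(B_a)}` for `‖z‖ < a`. -/
theorem norm_le_sqrt_integral_sq_of_lt (a : ℝ) (ha : 0 < a) (f : ℂ → ℂ)
    (hf : DifferentiableOn ℂ f (ball (0 : ℂ) a))
    (hf2 : IntegrableOn (fun z => ‖f z‖ ^ 2) (ball (0 : ℂ) a)) :
    ∀ z : ℂ, ‖z‖ < a →
      ‖f z‖ ≤ (Real.sqrt Real.pi * (a - ‖z‖))⁻¹ *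
        Real.sqrt (∫ w in ball (0 : ℂ) a, ‖f w‖ ^ 2) := by
  intro z hz
  set r₀ : ℝ := a - ‖z‖ with hr₀def
  have h0 : 0 < r₀ := sub_pos.2 hz
  have hsub : ball z r₀ ⊆ ball (0 : ℂ) a := by
    intro w hw
    rw [mem_ball, dist_eq_norm] at hw ⊢
    calc ‖w - 0‖ = ‖(w - z) + z‖ := by ring_nf
      _ ≤ ‖w - z‖ + ‖z‖ := norm_add_le _ _
      _ < r₀ + ‖z‖ := by linarith
      _ = a := by rw [hr₀def]; ring
  have hdisk := disk_submean f h0 (hf.mono hsub) (hf2.mono_set hsub)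
  set K : ℝ := ∫ w in ball (0 : ℂ) a, ‖f w‖ ^ 2 with hKdef
  have hball_le : (∫ w in ball z r₀, ‖f w‖ ^ 2) ≤ K := by
    apply setIntegral_mono_set hf2
    · filter_upwards with w using by positivity
    · exact HasSubset.Subset.eventuallyLE hsub
  have hkey : Real.pi * r₀ ^ 2 * ‖f z‖ ^ 2 ≤ K := hdisk.trans hball_le
  have hc : 0 < Real.sqrt Real.pi * r₀ := by
    apply mul_pos _ h0
    exact Real.sqrt_pos.2 Real.pi_pos
  rw [inv_mul_eq_div, le_div_iff₀ hc]
  apply Real.le_sqrt_of_sq_le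
  calc (‖f z‖ * (Real.sqrt Real.pi * r₀)) ^ 2
      = Real.sqrt Real.pi ^ 2 * r₀ ^ 2 * ‖f z‖ ^ 2 := by ring
    _ = Real.pi * r₀ ^ 2 * ‖f z‖ ^ 2 := by rw [Real.sq_sqrt Real.pi_pos.le]
    _ ≤ K := hkey
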